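/- Let Z be a finite Abelian group, U_1, ..., U_k ≤ Z subgroups with U_1 + ... + U_k = Z, and f : Z → ℝ a function satisfying d_{u_1} ⋯ d_{u_k} f(z) = 0 for all u_i ∈ U_i and z ∈ Z. Then f = f_1 + ... + f_k for some functions f_i : Z → ℝ with each f_i invariant under translation by U_i. Explicitly, one can take f(z) = Σ_{∅ ≠ e ⊆ [k]} (-1)^{|e|-1} · Avg_{u_1 ∈ U_1, ..., u_k ∈ U_k} f(z - Σ_{i∈e} u_i), where each summand is U_e-invariant (U_e = Σ_{i∈e} U_i). -/

import Mathlib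

/-- The differenced function `d_u g (z) = g (z - u) - g z`. -/
def ddiff {Z A : Type*} [AddCommGroup Z] [AddCommGroup A] (u : Z) (g : Z → A) : Z → A :=
  fun z => g (z - u) - g z

/-- Iterated differencing along a list of group elements. -/
def ddiffList {Z A : Type*} [AddCommGroup Z] [AddCommGroup A] (l : List Z) (g : Z → A) : Z → A :=
  l.foldr ddiff g


lemma my_powerset_map {α β : Type*} (f : α ↪ β) (s : Finset α) :
    (s.map f).powerset = s.powerset.map ⟨Finset.map f, Finset.map_injective f⟩ := by
  ext t
  simp only [Finset.mem_powerset, Finset.mem_map, Function.Embedding.coeFn_mk,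
    Finset.subset_map_iff]
  constructor
  · rintro ⟨v, hv, rfl⟩; exact ⟨v, by simpa using hv, rfl⟩
  · rintro ⟨v, hv, rfl⟩; exact ⟨v, by simpa using hv, rfl⟩

lemma ddiffList_expand {Z : Type*} [AddCommGroup Z] (k : ℕ) (u : Fin k → Z) (g : Z → ℝ)
    (z : Z) :
    ddiffList (List.ofFn u) g z
      = ∑ e : Finset (Fin k), (-1:ℝ)^(k - e.card) * g (z - ∑ i ∈ e, u i) := by
  induction k generalizing g z with
  | zero =>
      rw [Finset.univ_unique]
      have hd : (default : Finset (Fin 0)) = ∅ := Subsingleton.elim _ _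
      simp [ddiffList, hd]
  | succ k ih =>
      have hlist : List.ofFn u = u 0 :: List.ofFn (fun i => u i.succ) := List.ofFn_succ
      have hL : ddiffList (List.ofFn u) g z
          = ddiffList (List.ofFn (fun i => u i.succ)) g (z - u 0)
            - ddiffList (List.ofFn (fun i => u i.succ)) g z := by
        rw [hlist]; rfl
      rw [hL, ih, ih]
      set emb : Fin k ↪ Fin (k+1) := ⟨Fin.succ, Fin.succ_injective k⟩ with hemb
      have hcard : ∀ e : Finset (Fin k), e.card ≤ k := fun e => by
        simpa using Finset.card_le_univ e
      have hnm : ∀ e : Finset (Fin k), (0 : Fin (k+1)) ∉ e.map emb := by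
        intro e h
        rcases Finset.mem_map.1 h with ⟨i, _, hi⟩
        exact Fin.succ_ne_zero i hi
      calc ∑ e : Finset (Fin k), (-1:ℝ)^(k - e.card) * g (z - u 0 - ∑ i ∈ e, u i.succ)
              - ∑ e : Finset (Fin k), (-1:ℝ)^(k - e.card) * g (z - ∑ i ∈ e, u i.succ)
          = ∑ e : Finset (Fin k),
              (-1:ℝ)^(k+1 - (e.map emb).card) * g (z - ∑ i ∈ e.map emb, u i)
            + ∑ e : Finset (Fin k),
              (-1:ℝ)^(k+1 - (insert 0 (e.map emb)).card)
                * g (z - ∑ i ∈ insert 0 (e.map emb), u i) := by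
            have h1 : ∀ e : Finset (Fin k),
                (-1:ℝ)^(k+1 - (e.map emb).card) * g (z - ∑ i ∈ e.map emb, u i)
                  = -((-1:ℝ)^(k - e.card) * g (z - ∑ i ∈ e, u i.succ)) := by
              intro e
              rw [Finset.card_map, Finset.sum_map]
              have hce := hcard e
              have : k + 1 - e.card = (k - e.card) + 1 := by omega
              rw [this, pow_succ]
              simp only [hemb, Function.Embedding.coeFn_mk]
              ring
            have h2 : ∀ e : Finset (Fin k),
                (-1:ℝ)^(k+1 - (insert 0 (e.map emb)).card)
                    * g (z - ∑ i ∈ insert 0 (e.map emb), u i)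
                  = (-1:ℝ)^(k - e.card) * g (z - u 0 - ∑ i ∈ e, u i.succ) := by
              intro e
              rw [Finset.card_insert_of_notMem (hnm e), Finset.card_map,
                Finset.sum_insert (hnm e), Finset.sum_map, Nat.succ_sub_succ,
                sub_add_eq_sub_sub]
              simp only [hemb, Function.Embedding.coeFn_mk]
            rw [Finset.sum_congr rfl (fun e _ => h1 e),
              Finset.sum_congr rfl (fun e _ => h2 e), Finset.sum_neg_distrib]
            ring
        _ = ∑ e : Finset (Fin (k+1)), (-1:ℝ)^(k+1 - e.card) * g (z - ∑ i ∈ e, u i) := by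
            have hps : ∑ e : Finset (Fin (k+1)), (-1:ℝ)^(k+1 - e.card) * g (z - ∑ i ∈ e, u i)
                = ∑ e ∈ (Finset.univ : Finset (Fin (k+1))).powerset,
                    (-1:ℝ)^(k+1 - e.card) * g (z - ∑ i ∈ e, u i) := by
              rw [Finset.powerset_univ]
            rw [hps, Fin.univ_succ, Finset.cons_eq_insert,
              Finset.sum_powerset_insert (by simpa using hnm Finset.univ),
              my_powerset_map, Finset.powerset_univ, Finset.sum_map, Finset.sum_map]
            rfl

/-- On a finite Abelian group `Z` with subgroups `U_1 + … + U_k = Z`, every real-valued solution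
of the order-`k` partial difference equation is a sum of `U_i`-invariant functions; explicitly,
`f(z) = ∑_{∅≠e} (-1)^{|e|-1} Avg_u f(z - ∑_{i∈e} u_i)`, and each summand is `U_e`-invariant. -/
theorem finite_real_PDE_degenerate
    (Z : Type*) [AddCommGroup Z] [Fintype Z]
    (k : ℕ) (U : Fin k → AddSubgroup Z) [∀ i, Fintype (U i)]
    (hU : (⨆ i, U i) = ⊤)
    (f : Z → ℝ)
    (hf : ∀ u : Fin k → Z, (∀ i, u i ∈ U i) → ∀ z, ddiffList (List.ofFn u) f z = 0) :
    (∃ g : Fin k → Z → ℝ,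
        (∀ i, ∀ u ∈ U i, ∀ z, g i (z - u) = g i z) ∧ ∀ z, f z = ∑ i, g i z) ∧
    (∀ z, f z = ∑ e ∈ Finset.univ.filter (fun e : Finset (Fin k) => e.Nonempty),
        (-1 : ℝ) ^ (e.card - 1) *
          ((∑ u : ∀ i, U i, f (z - ∑ i ∈ e, (u i : Z))) /
            (Fintype.card (∀ i, U i) : ℝ))) ∧
    (∀ e : Finset (Fin k), e.Nonempty → ∀ v ∈ ⨆ i ∈ e, U i, ∀ z,
        (∑ u : ∀ i, U i, f ((z - v) - ∑ i ∈ e, (u i : Z))) =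
          ∑ u : ∀ i, U i, f (z - ∑ i ∈ e, (u i : Z))) := by
  classical
  -- Part 3: invariance
  have key3 : ∀ e : Finset (Fin k), ∀ v ∈ ⨆ i ∈ e, U i, ∀ z,
      (∑ u : ∀ i, U i, f ((z - v) - ∑ i ∈ e, (u i : Z))) =
        ∑ u : ∀ i, U i, f (z - ∑ i ∈ e, (u i : Z)) := by
    intro e
    set V : AddSubgroup Z :=
      { carrier := {v | ∀ z, (∑ u : ∀ i, U i, f ((z - v) - ∑ i ∈ e, (u i : Z))) =
          ∑ u : ∀ i, U i, f (z - ∑ i ∈ e, (u i : Z))}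
        zero_mem' := by intro z; simp
        add_mem' := by
          intro a b ha hb z
          have h1 : z - (a + b) = (z - b) - a := by abel
          rw [h1, ha (z - b), hb z]
        neg_mem' := by
          intro a ha z
          have h1 : z - (-a) = z + a := by abel
          have h2 := ha (z + a)
          have h3 : z + a - a = z := by abel
          rw [h3] at h2
          rw [h1, ← h2] } with hV
    suffices h : (⨆ i ∈ e, U i) ≤ V by exact fun v hv z => h hv z
    apply iSup₂_le
    intro i hi v hv z
    -- base case: translation by v ∈ U i with i ∈ e
    show (∑ u : ∀ i, U i, f ((z - v) - ∑ j ∈ e, (u j : Z))) =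
        ∑ u : ∀ i, U i, f (z - ∑ j ∈ e, (u j : Z))
    set w : ∀ j, U j := Pi.single i ⟨v, hv⟩ with hw
    have hws : ∑ j ∈ e, (w j : Z) = v := by
      rw [Finset.sum_eq_single i]
      · simp [hw]
      · intro j _ hj
        simp [hw, Pi.single_eq_of_ne hj]
      · intro h; exact absurd hi h
    apply Fintype.sum_equiv (Equiv.addRight w)
    intro u
    congr 1
    have hsum : ∑ j ∈ e, (((u + w) j : Z)) = (∑ j ∈ e, (u j : Z)) + v := by
      simp only [Pi.add_apply, AddSubgroup.coe_add]
      rw [Finset.sum_add_distrib, hws]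
    show z - v - ∑ j ∈ e, (u j : Z) = z - ∑ j ∈ e, (((Equiv.addRight w) u) j : Z)
    rw [Equiv.coe_addRight, hsum]
    abel
  -- averaged difference equation
  have hsum0 : ∀ z, ∑ e : Finset (Fin k),
      (-1:ℝ)^(k - e.card) * (∑ u : ∀ i, U i, f (z - ∑ i ∈ e, (u i : Z))) = 0 := by
    intro z
    have h1 : ∀ u : ∀ i, U i,
        ∑ e : Finset (Fin k), (-1:ℝ)^(k - e.card) * f (z - ∑ i ∈ e, (u i : Z)) = 0 := by
      intro u
      rw [← ddiffList_expand]
      exact hf _ (fun i => (u i).2) z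
    calc ∑ e : Finset (Fin k),
          (-1:ℝ)^(k - e.card) * (∑ u : ∀ i, U i, f (z - ∑ i ∈ e, (u i : Z)))
        = ∑ e : Finset (Fin k), ∑ u : ∀ i, U i,
            (-1:ℝ)^(k - e.card) * f (z - ∑ i ∈ e, (u i : Z)) := by
          simp_rw [Finset.mul_sum]
      _ = ∑ u : ∀ i, U i, ∑ e : Finset (Fin k),
            (-1:ℝ)^(k - e.card) * f (z - ∑ i ∈ e, (u i : Z)) := Finset.sum_comm
      _ = 0 := by
          rw [Finset.sum_congr rfl (fun u _ => h1 u), Finset.sum_const, smul_zero]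
  have hsum1 : ∀ z, ∑ e : Finset (Fin k),
      (-1:ℝ)^e.card * (∑ u : ∀ i, U i, f (z - ∑ i ∈ e, (u i : Z))) = 0 := by
    intro z
    have hpow : ∀ e : Finset (Fin k),
        (-1:ℝ)^(k - e.card) = (-1:ℝ)^k * (-1:ℝ)^e.card := by
      intro e
      have hce : e.card ≤ k := by simpa using Finset.card_le_univ e
      have h1 : (-1:ℝ)^(k - e.card) * (-1:ℝ)^e.card = (-1:ℝ)^k := by
        rw [← pow_add]; congr 1; omega
      have h2 : (-1:ℝ)^e.card * (-1:ℝ)^e.card = 1 := by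
        rw [← pow_add]; exact Even.neg_one_pow ⟨e.card, by ring⟩
      calc (-1:ℝ)^(k - e.card) = (-1:ℝ)^(k - e.card) * ((-1)^e.card * (-1)^e.card) := by
            rw [h2, mul_one]
        _ = ((-1:ℝ)^(k - e.card) * (-1)^e.card) * (-1)^e.card := by ring
        _ = (-1:ℝ)^k * (-1)^e.card := by rw [h1]
    have h := hsum0 z
    rw [Finset.sum_congr rfl (fun e _ => by rw [hpow e, mul_assoc])] at h
    rw [← Finset.mul_sum] at h
    rcases mul_eq_zero.1 h with h' | h'
    · exact absurd h' (by positivity)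
    · exact h'
  -- Part 2
  have hN : (0:ℝ) < (Fintype.card (∀ i, U i) : ℝ) := by
    exact_mod_cast Fintype.card_pos
  have hpart2 : ∀ z, f z = ∑ e ∈ Finset.univ.filter (fun e : Finset (Fin k) => e.Nonempty),
      (-1 : ℝ) ^ (e.card - 1) *
        ((∑ u : ∀ i, U i, f (z - ∑ i ∈ e, (u i : Z))) /
          (Fintype.card (∀ i, U i) : ℝ)) := by
    intro z
    have h := hsum1 z
    rw [← Finset.sum_filter_add_sum_filter_not Finset.univ
      (fun e : Finset (Fin k) => e.Nonempty)] at h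
    have hempty : Finset.univ.filter (fun e : Finset (Fin k) => ¬ e.Nonempty) = {∅} := by
      ext e; simp [Finset.not_nonempty_iff_eq_empty]
    rw [hempty, Finset.sum_singleton] at h
    simp only [Finset.card_empty, pow_zero, one_mul, Finset.sum_empty, sub_zero,
      Finset.sum_const, Finset.card_univ, nsmul_eq_mul] at h
    -- h : ∑ nonempty e, (-1)^|e| * S e + N * f z = 0
    have hterm : ∀ e ∈ Finset.univ.filter (fun e : Finset (Fin k) => e.Nonempty),
        (-1 : ℝ) ^ (e.card - 1) *
          ((∑ u : ∀ i, U i, f (z - ∑ i ∈ e, (u i : Z))) /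
            (Fintype.card (∀ i, U i) : ℝ))
        = -((-1:ℝ)^e.card * (∑ u : ∀ i, U i, f (z - ∑ i ∈ e, (u i : Z)))) /
            (Fintype.card (∀ i, U i) : ℝ) := by
      intro e he
      have hne : e.Nonempty := (Finset.mem_filter.1 he).2
      obtain ⟨m, hm⟩ : ∃ m, e.card = m + 1 :=
        ⟨e.card - 1, by have := Finset.card_pos.2 hne; omega⟩
      rw [hm]
      simp only [Nat.add_sub_cancel, pow_succ]
      ring
    rw [Finset.sum_congr rfl hterm, ← Finset.sum_div, Finset.sum_neg_distrib,
      eq_div_iff hN.ne']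
    linarith
  refine ⟨?_, hpart2, fun e _ v hv z => key3 e v hv z⟩
  -- Part 1
  refine ⟨fun i z => ∑ e ∈ Finset.univ.filter (fun e : Finset (Fin k) => e.Nonempty),
    if e.min = (i : WithBot (Fin k)) then
      (-1 : ℝ) ^ (e.card - 1) *
        ((∑ u : ∀ i, U i, f (z - ∑ j ∈ e, (u j : Z))) /
          (Fintype.card (∀ i, U i) : ℝ)) else 0, ?_, ?_⟩
  · intro i u hu z
    refine Finset.sum_congr rfl fun e he => ?_
    by_cases hmin : e.min = (i : WithBot (Fin k))
    · rw [if_pos hmin, if_pos hmin]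
      have hie : i ∈ e := Finset.mem_of_min hmin
      have hue : u ∈ ⨆ j ∈ e, U j :=
        (le_iSup₂ (f := fun j (_ : j ∈ e) => U j) i hie) hu
      rw [key3 e u hue z]
    · rw [if_neg hmin, if_neg hmin]
  · intro z
    rw [hpart2 z]
    rw [Finset.sum_comm]
    refine Finset.sum_congr rfl fun e he => ?_
    have hne : e.Nonempty := (Finset.mem_filter.1 he).2
    rw [Finset.sum_eq_single_of_mem (e.min' hne) (Finset.mem_univ _)]
    · have hc : e.min = ((e.min' hne : Fin k) : WithBot (Fin k)) :=
        (Finset.coe_min' hne).symm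
      rw [if_pos hc]
    · intro j _ hj
      have hc : e.min ≠ ((j : Fin k) : WithBot (Fin k)) := by
        intro hc
        exact hj (WithBot.coe_inj.1 ((Finset.coe_min' hne).trans hc)).symm
      simp [hc]
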